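/- Let t_r > 0 and let λ : ℝ → ℝ be a continuous, nonnegative function that is periodic with period t_r. Set Λ := ∫₀^{t_r} λ(τ) dτ and assume Λ > 0. Let x_d ∈ [0, t_r). For x, x' ∈ [0, t_r), define the transition kernel k(x' | x) := λ(x') / (1 − exp(−Λ)) · exp(−∫_{x + x_d}^{u(x, x')} λ(τ) dτ), where u(x, x') := ⌈(x + x_d − x') / t_r⌉ · t_r + x' and ⌈a⌉ := ⌊a⌋ + 1. Then for every x ∈ [0, t_r), ∫₀^{t_r} k(x' | x) dx' = 1; that is, k(· | x) is a probability density on [0, t_r). -/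

import Mathlib

open intervalIntegral

private lemma ftc_exp (lam : ℝ → ℝ) (hcont : Continuous lam) (s a b : ℝ) :
    ∫ y in a..b, lam y * Real.exp (-(∫ τ in s..y, lam τ)) =
      Real.exp (-(∫ τ in s..a, lam τ)) - Real.exp (-(∫ τ in s..b, lam τ)) := by
  set F : ℝ → ℝ := fun y => ∫ τ in s..y, lam τ with hF
  have hFderiv : ∀ y : ℝ, HasDerivAt F (lam y) y := by
    intro y
    exact intervalIntegral.integral_hasDerivAt_right
      (hcont.intervalIntegrable _ _)
      hcont.aestronglyMeasurable.stronglyMeasurableAtFilter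
      hcont.continuousAt
  have hFcont : Continuous F :=
    intervalIntegral.continuous_primitive (fun a b => hcont.intervalIntegrable a b) s
  have hG : ∀ y : ℝ, HasDerivAt (fun u => -Real.exp (-(F u))) (lam y * Real.exp (-(F y))) y := by
    intro y
    have h1 : HasDerivAt (fun u => -Real.exp (-(F u))) (-(Real.exp (-(F y)) * -lam y)) y :=
      (((hFderiv y).neg).exp).neg
    convert h1 using 1
    ring
  have hint : IntervalIntegrable (fun y => lam y * Real.exp (-(F y))) MeasureTheory.volume a b :=
    (hcont.mul ((hFcont.neg).rexp)).intervalIntegrable a b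
  have := intervalIntegral.integral_eq_sub_of_hasDerivAt (fun y _ => hG y) hint
  rw [this]; ring

/-- The Markov transition kernel of detection times modulo the repetition period
(Proposition 1 of the paper) is a probability density: it integrates to 1 over
one period. Here `u(x,x') = ⌈(x + x_d − x')/t_r⌉·t_r + x'` with `⌈a⌉ := ⌊a⌋ + 1`. -/
theorem transition_kernel_integrates_to_one
    (tr : ℝ) (htr : 0 < tr) (lam : ℝ → ℝ) (hcont : Continuous lam)
    (hnn : ∀ t, 0 ≤ lam t) (hper : Function.Periodic lam tr)
    (Λ : ℝ) (hΛdef : Λ = ∫ τ in (0 : ℝ)..tr, lam τ) (hΛ : 0 < Λ)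
    (xd : ℝ) (hxd : xd ∈ Set.Ico (0 : ℝ) tr) :
    ∀ x ∈ Set.Ico (0 : ℝ) tr,
      (∫ x' in (0 : ℝ)..tr,
          lam x' / (1 - Real.exp (-Λ)) *
            Real.exp (-(∫ τ in (x + xd)..(((⌊(x + xd - x') / tr⌋ : ℝ) + 1) * tr + x'),
              lam τ)))
        = 1 := by
  intro x hx
  set s : ℝ := x + xd with hs
  set m : ℤ := ⌊s / tr⌋ with hmdef
  have hmle : (m : ℝ) * tr ≤ s := by
    have h1 : (m : ℝ) ≤ s / tr := Int.floor_le (s / tr)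
    calc (m : ℝ) * tr ≤ (s / tr) * tr := by nlinarith
      _ = s := by field_simp
  have hmlt : s < ((m : ℝ) + 1) * tr := by
    have h1 : s / tr < (m : ℝ) + 1 := Int.lt_floor_add_one (s / tr)
    have := (div_lt_iff₀ htr).mp h1
    linarith
  set c : ℝ := s - (m : ℝ) * tr with hcdef
  have hc0 : 0 ≤ c := by simp [hcdef]; linarith
  have hcle : c ≤ tr := by simp [hcdef]; nlinarith
  set g : ℝ → ℝ := fun y => lam y * Real.exp (-(∫ τ in s..y, lam τ)) with hgdef
  have hgc : Continuous g :=
    hcont.mul (((intervalIntegral.continuous_primitive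
      (fun a b => hcont.intervalIntegrable a b) s).neg).rexp)
  have hE : 0 < 1 - Real.exp (-Λ) := by
    have : Real.exp (-Λ) < 1 := Real.exp_lt_one_iff.mpr (by linarith)
    linarith
  -- the "raw" integrand
  set f : ℝ → ℝ := fun x' =>
    lam x' * Real.exp (-(∫ τ in s..(((⌊(s - x') / tr⌋ : ℝ) + 1) * tr + x'), lam τ)) with hfdef
  -- floor computations
  have hfl1 : ∀ y ∈ Set.Icc (0 : ℝ) c, ⌊(s - y) / tr⌋ = m := by
    rintro y ⟨hy0, hyc⟩
    rw [Int.floor_eq_iff]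
    constructor
    · rw [le_div_iff₀ htr]; simp only [hcdef] at hyc; linarith
    · rw [div_lt_iff₀ htr]; push_cast; linarith
  have hfl2 : ∀ y ∈ Set.Ioc c tr, ⌊(s - y) / tr⌋ = m - 1 := by
    rintro y ⟨hyc, hyt⟩
    rw [Int.floor_eq_iff]
    constructor
    · rw [le_div_iff₀ htr]; push_cast; linarith
    · rw [div_lt_iff₀ htr]; push_cast; simp only [hcdef] at hyc; linarith
  -- equality on each piece
  have heq1 : Set.EqOn f (fun y => g (y + ((m : ℝ) + 1) * tr)) (Set.Icc 0 c) := by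
    intro y hy
    have hpery : lam (y + ((m : ℝ) + 1) * tr) = lam y := by
      have := (hper.int_mul (m + 1)) y
      push_cast at this
      simpa using this
    have hpery' : lam (((m : ℝ) + 1) * tr + y) = lam y := by rw [add_comm]; exact hpery
    simp only [hfdef, hgdef, hfl1 y hy, hpery', add_comm y (((m : ℝ) + 1) * tr)]
  have heq2 : Set.EqOn f (fun y => g (y + (m : ℝ) * tr)) (Set.Ioc c tr) := by
    intro y hy
    have hpery : lam (y + (m : ℝ) * tr) = lam y := by
      have := (hper.int_mul m) y
      simpa using this
    have hc : ((m : ℝ) - 1 + 1) * tr + y = y + (m : ℝ) * tr := by ring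
    simp only [hfdef, hgdef, hfl2 y hy]
    push_cast
    rw [hc, hpery]
  -- integrability of f on the pieces
  have hint1 : IntervalIntegrable f MeasureTheory.volume 0 c := by
    rw [intervalIntegrable_iff_integrableOn_Ioc_of_le hc0]
    exact ((hgc.comp (continuous_id.add continuous_const)).integrableOn_Ioc).congr_fun
      (fun y hy => (heq1 (Set.Ioc_subset_Icc_self hy)).symm) measurableSet_Ioc
  have hint2 : IntervalIntegrable f MeasureTheory.volume c tr := by
    rw [intervalIntegrable_iff_integrableOn_Ioc_of_le hcle]
    exact ((hgc.comp (continuous_id.add continuous_const)).integrableOn_Ioc).congr_fun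
      (fun y hy => (heq2 hy).symm) measurableSet_Ioc
  have hsplit : (∫ x' in (0:ℝ)..tr, f x') = (∫ x' in (0:ℝ)..c, f x') + ∫ x' in c..tr, f x' :=
    (intervalIntegral.integral_add_adjacent_intervals hint1 hint2).symm
  have hI1 : (∫ x' in (0:ℝ)..c, f x') = ∫ y in (((m:ℝ)+1)*tr)..(s + tr), g y := by
    rw [intervalIntegral.integral_congr (g := fun y => g (y + ((m : ℝ) + 1) * tr))
      (by rwa [Set.uIcc_of_le hc0]),
      intervalIntegral.integral_comp_add_right g (((m : ℝ) + 1) * tr)]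
    congr 1
    · ring
    · simp [hcdef]; ring
  have hI2 : (∫ x' in c..tr, f x') = ∫ y in s..(((m:ℝ)+1)*tr), g y := by
    rw [intervalIntegral.integral_congr_ae (g := fun y => g (y + (m : ℝ) * tr))
      (Filter.Eventually.of_forall (fun y hy => heq2 (by rwa [Set.uIoc_of_le hcle] at hy))),
      intervalIntegral.integral_comp_add_right g ((m : ℝ) * tr)]
    congr 1
    · simp only [hcdef]; ring
    · ring
  have hsum : (∫ x' in (0:ℝ)..tr, f x') = ∫ y in s..(s + tr), g y := by
    rw [hsplit, hI1, hI2, add_comm]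
    exact intervalIntegral.integral_add_adjacent_intervals
      (hgc.intervalIntegrable _ _) (hgc.intervalIntegrable _ _)
  have hΛs : (∫ τ in s..(s + tr), lam τ) = Λ := by
    rw [hper.intervalIntegral_add_eq s 0, zero_add, hΛdef]
  have hfin : (∫ x' in (0:ℝ)..tr, f x') = 1 - Real.exp (-Λ) := by
    rw [hsum, hgdef, ftc_exp lam hcont s s (s + tr), intervalIntegral.integral_same, hΛs]
    simp
  calc (∫ x' in (0 : ℝ)..tr,
          lam x' / (1 - Real.exp (-Λ)) *
            Real.exp (-(∫ τ in s..(((⌊(s - x') / tr⌋ : ℝ) + 1) * tr + x'), lam τ)))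
      = ∫ x' in (0 : ℝ)..tr, (1 - Real.exp (-Λ))⁻¹ * f x' := by
        apply intervalIntegral.integral_congr
        intro y _
        simp only [hfdef]
        ring
    _ = (1 - Real.exp (-Λ))⁻¹ * ∫ x' in (0 : ℝ)..tr, f x' :=
        intervalIntegral.integral_const_mul _ _
    _ = 1 := by rw [hfin, inv_mul_cancel₀ (ne_of_gt hE)]
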